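/- Let d ≥ 1 and 1 ≤ M ≤ N. Index the k-fold tensor power of ℂ^d by functions Fin k → Fin d, let P₊^{(k)} be the symmetrizer and d₊^{(k)} := C(d+k−1,k). Identify Fin N with the juxtaposition of Fin M and Fin (N−M). Let K be the matrix indexed by ((Fin M → Fin d) × (Fin N → Fin d)) with entry K ((f,g),(f',g')) equal to P₊^{(N−M)} (tail of g, tail of g') if f coincides with the restriction of g to the first M factors and f' coincides with the restriction of g' to the first M factors, and 0 otherwise, and define C⁺ := (P₊^{(M)} ⊗ P₊^{(N)}) · K · (P₊^{(M)} ⊗ P₊^{(N)}) (the Choi matrix of the symmetric partial trace channel from N to M copies). Then C⁺ · C⁺ = (d₊^{(N)}/d₊^{(N−M)}) · C⁺; that is, C⁺ is d₊^{(N)}/d₊^{(N−M)} times an orthogonal projection, so its only nonzero eigenvalue is d₊^{(N)}/d₊^{(N−M)}. -/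

import Mathlib

open Matrix
open scoped Kronecker ComplexOrder

/-- The permutation matrix on the k-fold tensor power of ℂ^d associated to a
permutation π of the tensor factors. -/
noncomputable def permMat (d k : ℕ) (π : Equiv.Perm (Fin k)) :
    Matrix (Fin k → Fin d) (Fin k → Fin d) ℂ :=
  Matrix.of fun f g => if g = f ∘ π then 1 else 0

/-- The symmetrizer: the orthogonal projection onto the symmetric subspace of the
k-fold tensor power of ℂ^d. -/
noncomputable def symProj (d k : ℕ) : Matrix (Fin k → Fin d) (Fin k → Fin d) ℂ :=
  (1 / (Nat.factorial k : ℂ)) • ∑ π : Equiv.Perm (Fin k), permMat d k π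

/-- Restriction of g : Fin N → Fin d to the first M tensor factors. -/
def headM (d M N : ℕ) (hMN : M ≤ N) (g : Fin N → Fin d) : Fin M → Fin d :=
  fun i => g ⟨i, lt_of_lt_of_le i.isLt hMN⟩

/-- Restriction of g : Fin N → Fin d to the last N - M tensor factors. -/
def tailM (d M N : ℕ) (hMN : M ≤ N) (g : Fin N → Fin d) : Fin (N - M) → Fin d :=
  fun i => g ⟨M + i, by have := i.isLt; omega⟩

/-- The matrix K = |I^{⊗M}⟩⟩⟨⟨I^{⊗M}| ⊗ P₊^{(N-M)} between the M output systems,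
the first M input systems, and the remaining N-M input systems. -/
noncomputable def Kmat (d M N : ℕ) (hMN : M ≤ N) :
    Matrix ((Fin M → Fin d) × (Fin N → Fin d)) ((Fin M → Fin d) × (Fin N → Fin d)) ℂ :=
  Matrix.of fun p q =>
    if p.1 = headM d M N hMN p.2 ∧ q.1 = headM d M N hMN q.2 then
      symProj d (N - M) (tailM d M N hMN p.2) (tailM d M N hMN q.2)
    else 0

/-- The Choi matrix of the symmetric partial trace channel from N to M ≤ N copies. -/
noncomputable def Cplus (d M N : ℕ) (hMN : M ≤ N) :
    Matrix ((Fin M → Fin d) × (Fin N → Fin d)) ((Fin M → Fin d) × (Fin N → Fin d)) ℂ :=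
  (symProj d M ⊗ₖ symProj d N) * Kmat d M N hMN * (symProj d M ⊗ₖ symProj d N)

open Finset

namespace CplusAux

noncomputable def cnt {γ : Type} [Fintype γ] [DecidableEq γ] {k : ℕ} (G G' : γ → Fin k) : ℂ :=
  ∑ π : Equiv.Perm γ, if G' = G ∘ ⇑π then 1 else 0

lemma cnt_comp {γ γ' : Type} [Fintype γ] [DecidableEq γ] [Fintype γ'] [DecidableEq γ']
    {k : ℕ} (e : γ' ≃ γ) (G G' : γ → Fin k) :
    cnt (G ∘ ⇑e) (G' ∘ ⇑e) = cnt G G' := by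
  unfold cnt
  refine Fintype.sum_equiv e.permCongr _ _ ?_
  intro π
  refine if_congr ?_ rfl rfl
  constructor
  · intro h; funext x
    have := congrFun h (e.symm x)
    simpa [Equiv.permCongr_apply] using this
  · intro h; funext x
    have := congrFun h (e x)
    simpa [Equiv.permCongr_apply] using this

lemma step {γ : Type} [Fintype γ] [DecidableEq γ] {k : ℕ} (u u' : γ → Fin k) :
    ∑ b : Fin k, cnt (fun o => Option.elim o b u) (fun o => Option.elim o b u')
      = ((k : ℂ) + Fintype.card γ) * cnt u u' := by
  have hre : ∀ b : Fin k,
      cnt (fun o => Option.elim o b u) (fun o => Option.elim o b u')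
        = ∑ p : Option γ × Equiv.Perm γ,
            if ((fun o => Option.elim o b u') =
              (fun o => Option.elim o b u) ∘ ⇑(Equiv.swap none p.1 * p.2.optionCongr))
            then (1:ℂ) else 0 := by
    intro b
    unfold cnt
    rw [← Equiv.sum_comp (Equiv.Perm.decomposeOption).symm]
    refine Fintype.sum_congr _ _ ?_
    intro p
    simp [Equiv.Perm.decomposeOption_symm_apply]
    exact if_congr Iff.rfl rfl rfl
  have hcond : ∀ (b : Fin k) (o : Option γ) (σ : Equiv.Perm γ),
      ((fun x => Option.elim x b u') =
          (fun x => Option.elim x b u) ∘ ⇑(Equiv.swap none o * σ.optionCongr))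
        ↔ ((∀ j, o = some j → b = u j) ∧ u' = u ∘ ⇑σ) := by
    intro b o σ
    cases o with
    | none =>
      simp only [Equiv.swap_self, one_mul]
      constructor
      · intro h
        refine ⟨by simp, funext fun i => ?_⟩
        have := congrFun h (some i)
        simpa using this
      · rintro ⟨-, h⟩
        funext x
        cases x with
        | none => simp
        | some i => simp [h]
    | some j =>
      constructor
      · intro h
        have hb : b = u j := by
          have := congrFun h none
          simpa [Equiv.swap_apply_left] using this
        refine ⟨fun j' hj' => by cases hj'; exact hb, funext fun i => ?_⟩
        have := congrFun h (some i)
        rw [Function.comp_apply, Equiv.Perm.mul_apply, Equiv.optionCongr_apply,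
          Option.map_some] at this
        rcases eq_or_ne (σ i) j with hij | hij
        · rw [hij, Equiv.swap_apply_right] at this
          simp only [Option.elim] at this
          rw [this, hb]; simp [hij]
        · have hne1 : (some (σ i) : Option γ) ≠ none := by simp
          have hne2 : (some (σ i) : Option γ) ≠ some j := by simpa using hij
          rw [Equiv.swap_apply_of_ne_of_ne hne1 hne2] at this
          simpa using this
      · rintro ⟨hb', h⟩
        have hb : b = u j := hb' j rfl
        funext x
        cases x with
        | none => simp [Equiv.swap_apply_left, hb]
        | some i =>
          rw [Function.comp_apply, Equiv.Perm.mul_apply, Equiv.optionCongr_apply,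
            Option.map_some]
          rcases eq_or_ne (σ i) j with hij | hij
          · rw [hij, Equiv.swap_apply_right]
            simp only [Option.elim]
            rw [h]
            simp [hij, hb]
          · have hne1 : (some (σ i) : Option γ) ≠ none := by simp
            have hne2 : (some (σ i) : Option γ) ≠ some j := by simpa using hij
            rw [Equiv.swap_apply_of_ne_of_ne hne1 hne2]
            simp [h]
  calc ∑ b : Fin k, cnt (fun o => Option.elim o b u) (fun o => Option.elim o b u')
      = ∑ b : Fin k, ∑ p : Option γ × Equiv.Perm γ,
          if ((∀ j, p.1 = some j → b = u j) ∧ u' = u ∘ ⇑p.2) then (1:ℂ) else 0 := by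
        refine Finset.sum_congr rfl fun b _ => ?_
        rw [hre b]
        exact Finset.sum_congr rfl fun p _ => if_congr (hcond b p.1 p.2) rfl rfl
    _ = ((k : ℂ) + Fintype.card γ) * cnt u u' := by
        unfold cnt
        rw [Finset.sum_comm]
        rw [Fintype.sum_prod_type]
        rw [Fintype.sum_option]
        simp only [Option.some.injEq, forall_eq', reduceCtorEq, false_implies, forall_const,
          true_and, ite_and, Finset.sum_ite_eq', Finset.mem_univ, if_true]
        simp only [imp_true_iff, if_true, Finset.sum_const, Finset.card_univ,
          Fintype.card_fin, nsmul_eq_mul, ← Finset.sum_mul, ← Finset.mul_sum]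
        ring


def optSum (α β : Type) : Option (α ⊕ β) ≃ (Option α ⊕ β) where
  toFun x := match x with
    | none => Sum.inl none
    | some (Sum.inl a) => Sum.inl (some a)
    | some (Sum.inr b) => Sum.inr b
  invFun y := match y with
    | Sum.inl none => none
    | Sum.inl (some a) => some (Sum.inl a)
    | Sum.inr b => some (Sum.inr b)
  left_inv := by rintro (_ | (a | b)) <;> rfl
  right_inv := by rintro ((_ | a) | b) <;> rfl

def eOpt (m : ℕ) (β : Type) : Option (Fin m ⊕ β) ≃ (Fin (m + 1) ⊕ β) :=
  (optSum (Fin m) β).trans (Equiv.sumCongr (finSuccEquiv m).symm (Equiv.refl β))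

lemma elim_cons_comp {k m : ℕ} {β : Type} (b : Fin k) (a : Fin m → Fin k) (t : β → Fin k) :
    Sum.elim (Fin.cons b a) t ∘ ⇑(eOpt m β) = fun o => Option.elim o b (Sum.elim a t) := by
  funext x
  rcases x with _ | (i | c)
  · simp [eOpt, optSum, finSuccEquiv_symm_none]
  · simp [eOpt, optSum, finSuccEquiv_symm_some]
  · simp [eOpt, optSum]

lemma main {k : ℕ} (β : Type) [Fintype β] [DecidableEq β] :
    ∀ (m : ℕ) (t t' : β → Fin k),
      ∑ a : Fin m → Fin k, cnt (Sum.elim a t) (Sum.elim a t')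
        = (∏ j ∈ Finset.range m, ((k : ℂ) + Fintype.card β + j)) * cnt t t' := by
  intro m
  induction m with
  | zero =>
    intro t t'
    have h0 : ∀ a : Fin 0 → Fin k, cnt (Sum.elim a t) (Sum.elim a t') = cnt t t' := by
      intro a
      rw [← cnt_comp (Equiv.emptySum (Fin 0) β).symm (Sum.elim a t) (Sum.elim a t')]
      congr 1 <;> funext x <;> simp
    simp [h0]
  | succ m ih =>
    intro t t'
    rw [← Equiv.sum_comp (Fin.consEquiv fun _ : Fin (m+1) => Fin k)
      (fun a => cnt (Sum.elim a t) (Sum.elim a t'))]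
    rw [Fintype.sum_prod_type, Finset.sum_comm]
    have hb : ∀ a0 : Fin m → Fin k, ∑ b : Fin k,
        cnt (Sum.elim (Fin.cons b a0) t) (Sum.elim (Fin.cons b a0) t')
          = ((k : ℂ) + Fintype.card (Fin m ⊕ β)) * cnt (Sum.elim a0 t) (Sum.elim a0 t') := by
      intro a0
      rw [← step (Sum.elim a0 t) (Sum.elim a0 t')]
      refine Finset.sum_congr rfl fun b _ => ?_
      rw [← cnt_comp (eOpt m β) (Sum.elim (Fin.cons b a0) t) (Sum.elim (Fin.cons b a0) t'),
        elim_cons_comp, elim_cons_comp]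
    have hc : ∀ p : Fin k × (Fin m → Fin k),
        cnt (Sum.elim ((Fin.consEquiv fun _ : Fin (m+1) => Fin k) p) t)
            (Sum.elim ((Fin.consEquiv fun _ : Fin (m+1) => Fin k) p) t')
          = cnt (Sum.elim (Fin.cons p.1 p.2) t) (Sum.elim (Fin.cons p.1 p.2) t') := by
      intro p; rfl
    simp only [hc]
    rw [Finset.sum_congr rfl fun a0 _ => hb a0]
    rw [← Finset.mul_sum, ih t t', Finset.prod_range_succ]
    simp only [Fintype.card_sum, Fintype.card_fin]
    push_cast
    ring


lemma fact_prod (a : ℕ) : ∀ m : ℕ, a.factorial * ∏ j ∈ Finset.range m, (a + 1 + j) = (a + m).factorial := by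
  intro m
  induction m with
  | zero => simp
  | succ m ih =>
    rw [Finset.prod_range_succ, ← mul_assoc, ih]
    have : a + (m + 1) = (a + m) + 1 := by omega
    rw [this, Nat.factorial_succ]
    ring

lemma scalar (d M N : ℕ) (hd : 1 ≤ d) (hMN : M ≤ N) :
    (1 / (N.factorial : ℂ)) * (∏ j ∈ Finset.range M, ((d : ℂ) + ((N - M : ℕ) : ℂ) + j))
      = ((Nat.choose (d + N - 1) N : ℂ) / (Nat.choose (d + (N - M) - 1) (N - M) : ℂ))
          * (1 / (((N - M).factorial : ℂ))) := by
  have h1 : (d + N - 1).choose N * (N.factorial * (d - 1).factorial) = (d + N - 1).factorial := by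
    have h := Nat.choose_mul_factorial_mul_factorial (show N ≤ d + N - 1 by omega)
    rw [show d + N - 1 - N = d - 1 by omega] at h
    rw [← h]; ring
  have h2 : (d + (N - M) - 1).choose (N - M) * ((N - M).factorial * (d - 1).factorial)
      = (d + (N - M) - 1).factorial := by
    have h := Nat.choose_mul_factorial_mul_factorial (show N - M ≤ d + (N - M) - 1 by omega)
    rw [show d + (N - M) - 1 - (N - M) = d - 1 by omega] at h
    rw [← h]; ring
  have h3 : (d + (N - M) - 1).factorial * ∏ j ∈ Finset.range M, (d + (N - M) + j)
      = (d + N - 1).factorial := by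
    have h := fact_prod (d + (N - M) - 1) M
    rw [show d + (N - M) - 1 + 1 = d + (N - M) by omega, show d + (N - M) - 1 + M = d + N - 1 by omega] at h
    exact h
  have hT : (∏ j ∈ Finset.range M, (d + (N - M) + j)) *
      ((d + (N - M) - 1).choose (N - M)) * (N - M).factorial * (d - 1).factorial
        = (d + N - 1).choose N * N.factorial * (d - 1).factorial := by
    calc (∏ j ∈ Finset.range M, (d + (N - M) + j)) *
        ((d + (N - M) - 1).choose (N - M)) * (N - M).factorial * (d - 1).factorial
        = (∏ j ∈ Finset.range M, (d + (N - M) + j)) *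
            ((d + (N - M) - 1).choose (N - M) * ((N - M).factorial * (d - 1).factorial)) := by ring
      _ = (∏ j ∈ Finset.range M, (d + (N - M) + j)) * (d + (N - M) - 1).factorial := by rw [h2]
      _ = (d + N - 1).factorial := by rw [mul_comm]; exact h3
      _ = (d + N - 1).choose N * N.factorial * (d - 1).factorial := by rw [← h1]; ring
  have hT2 : (∏ j ∈ Finset.range M, (d + (N - M) + j)) *
      ((d + (N - M) - 1).choose (N - M)) * (N - M).factorial
        = (d + N - 1).choose N * N.factorial :=
    Nat.eq_of_mul_eq_mul_right (Nat.factorial_pos (d - 1)) hT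
  have hprod : (∏ j ∈ Finset.range M, ((d : ℂ) + ((N - M : ℕ) : ℂ) + j))
      = ((∏ j ∈ Finset.range M, (d + (N - M) + j) : ℕ) : ℂ) := by
    push_cast; rfl
  have hfN : ((N.factorial : ℂ)) ≠ 0 := Nat.cast_ne_zero.mpr (Nat.factorial_ne_zero N)
  have hfNM : (((N - M).factorial : ℂ)) ≠ 0 := Nat.cast_ne_zero.mpr (Nat.factorial_ne_zero _)
  have hc2 : ((Nat.choose (d + (N - M) - 1) (N - M) : ℂ)) ≠ 0 :=
    Nat.cast_ne_zero.mpr (Nat.choose_pos (show N - M ≤ d + (N - M) - 1 by omega)).ne'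
  rw [hprod]
  field_simp
  norm_cast
  rw [mul_comm (Nat.factorial N)]
  exact hT2


section MatrixSide

open Matrix
variable {d M N : ℕ}

lemma symProj_apply (d k : ℕ) (f g : Fin k → Fin d) :
    symProj d k f g = (1 / (Nat.factorial k : ℂ)) * cnt f g := by
  simp [symProj, cnt, permMat, Matrix.smul_apply, Matrix.sum_apply, smul_eq_mul]

lemma cnt_comp_right {k m : ℕ} (π : Equiv.Perm (Fin m)) (f g : Fin m → Fin k) :
    cnt f (g ∘ ⇑π) = cnt f g := by
  unfold cnt
  refine Fintype.sum_equiv (Equiv.mulRight π⁻¹) _ _ ?_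
  intro σ
  refine if_congr ?_ rfl rfl
  constructor
  · intro h; funext x
    have := congrFun h (π⁻¹ x)
    simpa using this
  · intro h; funext x
    have := congrFun h (π x)
    simpa using this

lemma symProj_comp_right {k m : ℕ} (π : Equiv.Perm (Fin m)) (f g : Fin m → Fin k) :
    symProj k m f (g ∘ ⇑π) = symProj k m f g := by
  rw [symProj_apply, symProj_apply, cnt_comp_right]

lemma permMat_mul (d k : ℕ) (π τ : Equiv.Perm (Fin k)) :
    permMat d k π * permMat d k τ = permMat d k (π * τ) := by
  ext f g
  simp only [Matrix.mul_apply, permMat, Matrix.of_apply, ite_mul, one_mul, zero_mul,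
    Finset.sum_ite_eq', Finset.mem_univ, if_true]
  refine if_congr ?_ rfl rfl
  constructor
  · intro h; rw [h]; rfl
  · intro h; rw [h]; rfl

lemma symProj_mul_permMat (d k : ℕ) (τ : Equiv.Perm (Fin k)) :
    symProj d k * permMat d k τ = symProj d k := by
  unfold symProj
  rw [Matrix.smul_mul, Finset.sum_mul]
  congr 1
  refine Fintype.sum_equiv (Equiv.mulRight τ) _ _ ?_
  intro π
  rw [permMat_mul]
  rfl

lemma symProj_idem (d k : ℕ) : symProj d k * symProj d k = symProj d k := by
  nth_rewrite 2 [symProj]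
  rw [Matrix.mul_smul, Matrix.mul_sum]
  have : ∀ π : Equiv.Perm (Fin k), symProj d k * permMat d k π = symProj d k :=
    fun π => symProj_mul_permMat d k π
  simp only [this, Finset.sum_const, Finset.card_univ]
  rw [← Nat.cast_smul_eq_nsmul ℂ, smul_smul]
  rw [Fintype.card_perm, Fintype.card_fin]
  rw [one_div, inv_mul_cancel₀ (Nat.cast_ne_zero.mpr (Nat.factorial_ne_zero k)), one_smul]


def esum (M N : ℕ) (hMN : M ≤ N) : (Fin M ⊕ Fin (N - M)) ≃ Fin N :=
  finSumFinEquiv.trans (finCongr (by omega : M + (N - M) = N))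

lemma esum_inl (hMN : M ≤ N) (i : Fin M) :
    esum M N hMN (Sum.inl i) = ⟨i.1, lt_of_lt_of_le i.isLt hMN⟩ := by
  apply Fin.ext; simp [esum]

lemma esum_inr (hMN : M ≤ N) (j : Fin (N - M)) :
    esum M N hMN (Sum.inr j) = ⟨M + j.1, by have := j.isLt; omega⟩ := by
  apply Fin.ext; simp [esum]

noncomputable def glueF (d M N : ℕ) (hMN : M ≤ N) (a : Fin M → Fin d)
    (t : Fin (N - M) → Fin d) : Fin N → Fin d :=
  Sum.elim a t ∘ ⇑(esum M N hMN).symm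

lemma glue_comp_esum (hMN : M ≤ N) (a : Fin M → Fin d) (t : Fin (N - M) → Fin d) :
    glueF d M N hMN a t ∘ ⇑(esum M N hMN) = Sum.elim a t := by
  funext x; simp [glueF]

lemma headM_glue (hMN : M ≤ N) (a : Fin M → Fin d) (t : Fin (N - M) → Fin d) :
    headM d M N hMN (glueF d M N hMN a t) = a := by
  funext i
  have h1 : (esum M N hMN).symm ⟨i.1, lt_of_lt_of_le i.isLt hMN⟩ = Sum.inl i := by
    rw [Equiv.symm_apply_eq, esum_inl]
  show (Sum.elim a t ∘ ⇑(esum M N hMN).symm) _ = a i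
  rw [Function.comp_apply, h1, Sum.elim_inl]

lemma tailM_glue (hMN : M ≤ N) (a : Fin M → Fin d) (t : Fin (N - M) → Fin d) :
    tailM d M N hMN (glueF d M N hMN a t) = t := by
  funext j
  have h1 : (esum M N hMN).symm ⟨M + j.1, by have := j.isLt; omega⟩ = Sum.inr j := by
    rw [Equiv.symm_apply_eq, esum_inr]
  show (Sum.elim a t ∘ ⇑(esum M N hMN).symm) _ = t j
  rw [Function.comp_apply, h1, Sum.elim_inr]

lemma glue_head_tail (hMN : M ≤ N) (g : Fin N → Fin d) :
    glueF d M N hMN (headM d M N hMN g) (tailM d M N hMN g) = g := by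
  funext x
  have key : ∀ y, Sum.elim (headM d M N hMN g) (tailM d M N hMN g) y = g (esum M N hMN y) := by
    rintro (i | j)
    · rw [Sum.elim_inl, esum_inl]; rfl
    · rw [Sum.elim_inr, esum_inr]; rfl
  show Sum.elim _ _ ((esum M N hMN).symm x) = g x
  rw [key ((esum M N hMN).symm x), Equiv.apply_symm_apply]

noncomputable def glueEquiv (d M N : ℕ) (hMN : M ≤ N) :
    ((Fin M → Fin d) × (Fin (N - M) → Fin d)) ≃ (Fin N → Fin d) where
  toFun p := glueF d M N hMN p.1 p.2
  invFun g := (headM d M N hMN g, tailM d M N hMN g)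
  left_inv p := by
    apply Prod.ext
    · exact headM_glue hMN p.1 p.2
    · exact tailM_glue hMN p.1 p.2
  right_inv g := glue_head_tail hMN g

lemma glue_comp_perm (hMN : M ≤ N) (τ : Equiv.Perm (Fin M)) (a : Fin M → Fin d)
    (t : Fin (N - M) → Fin d) :
    glueF d M N hMN (a ∘ ⇑τ) t =
      glueF d M N hMN a t ∘
        ⇑((esum M N hMN).permCongr (Equiv.sumCongr τ (Equiv.refl (Fin (N - M))))) := by
  funext x
  simp only [glueF, Function.comp_apply, Equiv.permCongr_apply, Equiv.symm_apply_apply]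
  rcases hy : (esum M N hMN).symm x with i | j
  · simp
  · simp

noncomputable def Zmat (d M N : ℕ) (hMN : M ≤ N) :
    Matrix (Fin (N - M) → Fin d) (Fin (N - M) → Fin d) ℂ :=
  Matrix.of fun s s' => ∑ a : Fin M → Fin d, ∑ a' : Fin M → Fin d,
    symProj d M a a' * symProj d N (glueF d M N hMN a s) (glueF d M N hMN a' s')

lemma Zmat_eq (hd : 1 ≤ d) (hMN : M ≤ N) :
    Zmat d M N hMN =
      ((Nat.choose (d + N - 1) N : ℂ) / (Nat.choose (d + (N - M) - 1) (N - M) : ℂ)) •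
        symProj d (N - M) := by
  ext s s'
  have hA : ∀ a : Fin M → Fin d,
      ∑ a' : Fin M → Fin d, symProj d M a a'
          * symProj d N (glueF d M N hMN a s) (glueF d M N hMN a' s')
        = symProj d N (glueF d M N hMN a s) (glueF d M N hMN a s') := by
    intro a
    have e1 : ∀ a' : Fin M → Fin d, symProj d M a a'
        * symProj d N (glueF d M N hMN a s) (glueF d M N hMN a' s')
        = (1 / (Nat.factorial M : ℂ)) * ∑ τ : Equiv.Perm (Fin M),
            (if a' = a ∘ ⇑τ then
              symProj d N (glueF d M N hMN a s) (glueF d M N hMN a' s') else 0) := by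
      intro a'
      rw [symProj_apply, cnt, mul_assoc, Finset.sum_mul]
      congr 1
      refine Finset.sum_congr rfl fun τ _ => ?_
      rw [ite_mul, one_mul, zero_mul]
    rw [Finset.sum_congr rfl fun a' _ => e1 a']
    rw [← Finset.mul_sum, Finset.sum_comm]
    have e2 : ∀ τ : Equiv.Perm (Fin M),
        (∑ a' : Fin M → Fin d, if a' = a ∘ ⇑τ then
            symProj d N (glueF d M N hMN a s) (glueF d M N hMN a' s') else 0)
          = symProj d N (glueF d M N hMN a s) (glueF d M N hMN a s') := by
      intro τ
      rw [Finset.sum_ite_eq' Finset.univ (a ∘ ⇑τ)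
        (fun a' => symProj d N (glueF d M N hMN a s) (glueF d M N hMN a' s'))]
      rw [if_pos (Finset.mem_univ _)]
      rw [glue_comp_perm hMN τ a s', symProj_comp_right]
    rw [Finset.sum_congr rfl fun τ _ => e2 τ]
    rw [Finset.sum_const, Finset.card_univ, Fintype.card_perm, Fintype.card_fin,
      nsmul_eq_mul, ← mul_assoc, one_div,
      inv_mul_cancel₀ (Nat.cast_ne_zero.mpr (Nat.factorial_ne_zero M)), one_mul]
  show (∑ a : Fin M → Fin d, ∑ a' : Fin M → Fin d, _) = _
  rw [Finset.sum_congr rfl fun a _ => hA a]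
  have e3 : ∀ a : Fin M → Fin d,
      symProj d N (glueF d M N hMN a s) (glueF d M N hMN a s')
        = (1 / (Nat.factorial N : ℂ)) * cnt (Sum.elim a s) (Sum.elim a s') := by
    intro a
    rw [symProj_apply]
    congr 1
    rw [← cnt_comp (esum M N hMN) (glueF d M N hMN a s) (glueF d M N hMN a s'),
      glue_comp_esum, glue_comp_esum]
  rw [Finset.sum_congr rfl fun a _ => e3 a, ← Finset.mul_sum]
  rw [main (Fin (N - M)) M s s']
  rw [Matrix.smul_apply, symProj_apply, smul_eq_mul]
  rw [← mul_assoc, ← mul_assoc]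
  congr 1
  rw [← scalar d M N hd hMN]
  congr 1
  refine Finset.prod_congr rfl fun j _ => ?_
  rw [Fintype.card_fin]


noncomputable def Emat (d M N : ℕ) (hMN : M ≤ N) :
    Matrix ((Fin M → Fin d) × (Fin N → Fin d)) (Fin (N - M) → Fin d) ℂ :=
  Matrix.of fun p t =>
    if p.1 = headM d M N hMN p.2 ∧ t = tailM d M N hMN p.2 then 1 else 0

lemma K_factor (hMN : M ≤ N) :
    Kmat d M N hMN = Emat d M N hMN * symProj d (N - M) * (Emat d M N hMN)ᵀ := by
  ext p q
  simp only [Kmat, Matrix.of_apply, Matrix.mul_apply, Matrix.transpose_apply, Emat]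
  by_cases h1 : p.1 = headM d M N hMN p.2 <;>
    by_cases h2 : q.1 = headM d M N hMN q.2 <;>
      simp [h1, h2, ite_mul, mul_ite, zero_mul, mul_zero, one_mul, mul_one,
        Finset.sum_ite_eq', Finset.sum_ite_eq]

lemma EQE (hMN : M ≤ N) :
    (Emat d M N hMN)ᵀ * (symProj d M ⊗ₖ symProj d N) * Emat d M N hMN = Zmat d M N hMN := by
  ext s s'
  simp only [Matrix.mul_apply, Matrix.transpose_apply, Emat, Matrix.of_apply,
    Matrix.kroneckerMap_apply, Zmat]
  have hcol : ∀ q : (Fin M → Fin d) × (Fin N → Fin d),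
      (∑ p : (Fin M → Fin d) × (Fin N → Fin d),
        (if p.1 = headM d M N hMN p.2 ∧ s = tailM d M N hMN p.2 then (1:ℂ) else 0) *
          (symProj d M p.1 q.1 * symProj d N p.2 q.2))
        = ∑ a : Fin M → Fin d,
            symProj d M a q.1 * symProj d N (glueF d M N hMN a s) q.2 := by
    intro q
    rw [Fintype.sum_prod_type]
    have h1 : ∀ h : Fin N → Fin d,
        (∑ e : Fin M → Fin d,
          (if e = headM d M N hMN h ∧ s = tailM d M N hMN h then (1:ℂ) else 0) *
            (symProj d M e q.1 * symProj d N h q.2))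
          = (if s = tailM d M N hMN h then (1:ℂ) else 0) *
              (symProj d M (headM d M N hMN h) q.1 * symProj d N h q.2) := by
      intro h
      simp only [ite_and, ite_mul, one_mul, zero_mul, Finset.sum_ite_eq',
        Finset.mem_univ, if_true]
    rw [Finset.sum_comm]
    rw [Finset.sum_congr rfl fun h _ => h1 h]
    rw [← Equiv.sum_comp (glueEquiv d M N hMN)
      (fun h => (if s = tailM d M N hMN h then (1:ℂ) else 0) *
        (symProj d M (headM d M N hMN h) q.1 * symProj d N h q.2))]
    rw [Fintype.sum_prod_type]
    refine Finset.sum_congr rfl fun a _ => ?_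
    have hge : ∀ u, (glueEquiv d M N hMN) (a, u) = glueF d M N hMN a u := fun _ => rfl
    simp only [hge, headM_glue, tailM_glue, ite_mul, one_mul, zero_mul,
      Finset.sum_ite_eq, Finset.mem_univ, if_true]
  rw [Finset.sum_congr rfl fun q _ => congrArg
    (· * (if q.1 = headM d M N hMN q.2 ∧ s' = tailM d M N hMN q.2 then (1:ℂ) else 0))
    (hcol q)]
  rw [Fintype.sum_prod_type, Finset.sum_comm]
  have h2 : ∀ h' : Fin N → Fin d,
      (∑ e' : Fin M → Fin d,
        (∑ a : Fin M → Fin d, symProj d M a e' * symProj d N (glueF d M N hMN a s) h') *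
          (if e' = headM d M N hMN h' ∧ s' = tailM d M N hMN h' then (1:ℂ) else 0))
        = (if s' = tailM d M N hMN h' then (1:ℂ) else 0) *
            ∑ a : Fin M → Fin d,
              symProj d M a (headM d M N hMN h') * symProj d N (glueF d M N hMN a s) h' := by
    intro h'
    simp only [ite_and, mul_ite, mul_one, mul_zero, Finset.sum_ite_eq',
      Finset.mem_univ, if_true]
    by_cases hs : s' = tailM d M N hMN h' <;> simp [hs]
  rw [Finset.sum_congr rfl fun h' _ => h2 h']
  rw [← Equiv.sum_comp (glueEquiv d M N hMN)
    (fun h' => (if s' = tailM d M N hMN h' then (1:ℂ) else 0) *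
      ∑ a : Fin M → Fin d,
        symProj d M a (headM d M N hMN h') * symProj d N (glueF d M N hMN a s) h')]
  rw [Fintype.sum_prod_type]
  have hge : ∀ (a' : Fin M → Fin d) u, (glueEquiv d M N hMN) (a', u) = glueF d M N hMN a' u :=
    fun _ _ => rfl
  calc ∑ a' : Fin M → Fin d, ∑ u : Fin (N - M) → Fin d,
      (if s' = tailM d M N hMN ((glueEquiv d M N hMN) (a', u)) then (1:ℂ) else 0) *
        ∑ a'' : Fin M → Fin d,
          symProj d M a'' (headM d M N hMN ((glueEquiv d M N hMN) (a', u)))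
            * symProj d N (glueF d M N hMN a'' s) ((glueEquiv d M N hMN) (a', u))
      = ∑ a' : Fin M → Fin d,
          ∑ a'' : Fin M → Fin d,
            symProj d M a'' a' * symProj d N (glueF d M N hMN a'' s)
              (glueF d M N hMN a' s') := by
        refine Finset.sum_congr rfl fun a' _ => ?_
        simp only [hge, headM_glue, tailM_glue, ite_mul, one_mul, zero_mul,
          Finset.sum_ite_eq, Finset.mem_univ, if_true]
    _ = _ := Finset.sum_comm


lemma KQK (hd : 1 ≤ d) (hMN : M ≤ N) :
    Kmat d M N hMN * (symProj d M ⊗ₖ symProj d N) * Kmat d M N hMN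
      = ((Nat.choose (d + N - 1) N : ℂ) / (Nat.choose (d + (N - M) - 1) (N - M) : ℂ)) •
          Kmat d M N hMN := by
  set c : ℂ := ((Nat.choose (d + N - 1) N : ℂ) / (Nat.choose (d + (N - M) - 1) (N - M) : ℂ))
    with hc
  rw [K_factor hMN]
  set E := Emat d M N hMN with hE
  set P := symProj d (N - M) with hP
  set Q := symProj d M ⊗ₖ symProj d N with hQdef
  calc (E * P * Eᵀ) * Q * (E * P * Eᵀ)
      = E * P * (Eᵀ * Q * E) * P * Eᵀ := by simp only [Matrix.mul_assoc]
    _ = E * P * Zmat d M N hMN * P * Eᵀ := by rw [EQE hMN]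
    _ = E * (P * (c • P) * P) * Eᵀ := by
        rw [Zmat_eq hd hMN, ← hc, ← hP]
        simp only [Matrix.mul_assoc]
    _ = c • (E * P * Eᵀ) := by
        have hPP : P * P = P := symProj_idem d (N - M)
        rw [Matrix.mul_smul, hPP, Matrix.smul_mul, hPP, Matrix.mul_smul, Matrix.smul_mul]

end MatrixSide

end CplusAux

/-- The Choi matrix of the symmetric partial trace channel from N to M copies is
d₊^{(N)}/d₊^{(N-M)} times an orthogonal projection: its only nonzero eigenvalue is
d₊^{(N)}/d₊^{(N-M)}. -/
theorem Cplus_sq (d M N : ℕ) (hd : 1 ≤ d) (hM : 1 ≤ M) (hMN : M ≤ N) :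
    Cplus d M N hMN * Cplus d M N hMN =
      ((Nat.choose (d + N - 1) N : ℂ) / (Nat.choose (d + (N - M) - 1) (N - M) : ℂ)) •
        Cplus d M N hMN := by

  unfold Cplus
  set Q := symProj d M ⊗ₖ symProj d N with hQdef
  set K := Kmat d M N hMN with hK
  have hQ : Q * Q = Q := by
    rw [hQdef, ← Matrix.mul_kronecker_mul, CplusAux.symProj_idem, CplusAux.symProj_idem]
  have e1 : Q * K * Q * (Q * K * Q) = Q * K * Q * Q * K * Q := by
    simp only [← Matrix.mul_assoc]
  have e2 : Q * K * Q * Q = Q * K * Q := by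
    rw [Matrix.mul_assoc (Q * K) Q Q, hQ]
  have e3 : Q * K * Q * K * Q = Q * (K * Q * K) * Q := by
    simp only [← Matrix.mul_assoc]
  rw [e1, e2, e3, CplusAux.KQK hd hMN, Matrix.mul_smul, Matrix.smul_mul]
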